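/- arXiv:2506.10671 — 3 statements merged into one kernel-verified Lean document; each statement's English description precedes it below -/
import Mathlib

section
/- Let x ∈ P_ASEP(n) contain a λ-loop between v₁ and v₂, and let x' = x ↑^{v₃} (v₁,v₂) be the point in ℝ^{(n+1)n} obtained by the λ-loop breaking procedure, inserting a new node v₃ with x'_{v₁v₃} = x'_{v₃v₂} = λ, x'_{v₃v₁} = x'_{v₂v₃} = 1−λ, x'_{v₁v₂} = x'_{v₂v₁} = 0, all other arcs incident to v₃ zero, and x'_{uv} = x_{uv} otherwise. Then x' ∈ P_ASEP(n+1). -/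
open Finset

/-- The Asymmetric Subtour Elimination Polytope on `n` nodes. -/
def PASEP (n : ℕ) (x : Fin n → Fin n → ℝ) : Prop :=
  (∀ i j, 0 ≤ x i j) ∧ (∀ i, x i i = 0) ∧
  (∀ j, ∑ i, x i j = 1) ∧ (∀ i, ∑ j, x i j = 1) ∧
  ∀ S : Finset (Fin n), 2 ≤ S.card → S.card ≤ n - 2 →
    1 ≤ ∑ i ∈ S, ∑ j ∈ Sᶜ, x i j

/-- The `λ`-loop breaking procedure `x ↑^{v₃} (v₁, v₂)`: a new node `v₃`
(the last element of `Fin (n+1)`; old nodes are embedded via `Fin.castSucc`)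
is inserted into the `λ`-loop between `v₁` and `v₂`, with
`x'_{v₁v₃} = x'_{v₃v₂} = λ`, `x'_{v₃v₁} = x'_{v₂v₃} = 1 − λ`,
`x'_{v₁v₂} = x'_{v₂v₁} = 0`, all other arcs incident to `v₃` zero, and all other
entries unchanged. -/
def breakLoop (n : ℕ) (x : Fin n → Fin n → ℝ) (v₁ v₂ : Fin n) (lam : ℝ) :
    Fin (n + 1) → Fin (n + 1) → ℝ := fun u v =>
  if hu : u = Fin.last n then
    (if hv : v = Fin.last n then 0
     else if v.castPred hv = v₂ then lam
     else if v.castPred hv = v₁ then 1 - lam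
     else 0)
  else if hv : v = Fin.last n then
    (if u.castPred hu = v₁ then lam
     else if u.castPred hu = v₂ then 1 - lam
     else 0)
  else if u.castPred hu = v₁ ∧ v.castPred hv = v₂ then 0
  else if u.castPred hu = v₂ ∧ v.castPred hv = v₁ then 0
  else x (u.castPred hu) (v.castPred hv)

section Helpers

variable {n : ℕ} (x : Fin n → Fin n → ℝ) (v₁ v₂ : Fin n) (lam : ℝ)

lemma aux_sum_split (S : Finset (Fin (n+1))) (f : Fin (n+1) → ℝ) :
    ∑ i ∈ S, f i =
      (∑ i ∈ Finset.univ.filter (fun i : Fin n => i.castSucc ∈ S), f i.castSucc) +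
      (if Fin.last n ∈ S then f (Fin.last n) else 0) := by
  have h : ∑ i ∈ S, f i = ∑ i : Fin (n+1), if i ∈ S then f i else 0 := by
    rw [Finset.sum_ite_mem, Finset.univ_inter]
  rw [h, Fin.sum_univ_castSucc, Finset.sum_filter]

lemma aux_double_ind {α β : Type*} (A : Finset α) (B : Finset β) (a : α) (b : β)
    [DecidableEq α] [DecidableEq β] (c : ℝ) :
    ∑ i ∈ A, ∑ j ∈ B, (if i = a ∧ j = b then c else 0) =
      if a ∈ A ∧ b ∈ B then c else 0 := by
  have : ∀ i ∈ A, ∑ j ∈ B, (if i = a ∧ j = b then c else 0)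
      = if i = a then (if b ∈ B then c else 0) else 0 := by
    intro i _
    by_cases hi : i = a
    · simp only [hi, true_and, if_pos rfl]
      exact Finset.sum_ite_eq' B b (fun _ => c)
    · simp [hi]
  rw [Finset.sum_congr rfl this, Finset.sum_ite_eq' A a
    (fun _ => if b ∈ B then c else 0)]
  by_cases hA : a ∈ A <;> by_cases hB : b ∈ B <;> simp [hA, hB]

lemma aux_P1 (hne : v₁ ≠ v₂) (ha : x v₁ v₂ = lam) (hb : x v₂ v₁ = 1 - lam)
    (i j : Fin n) :
    breakLoop n x v₁ v₂ lam i.castSucc j.castSucc =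
      x i j - (if i = v₁ ∧ j = v₂ then lam else 0)
        - (if i = v₂ ∧ j = v₁ then 1 - lam else 0) := by
  have hi := (Fin.castSucc_lt_last i).ne
  have hj := (Fin.castSucc_lt_last j).ne
  simp only [breakLoop, dif_neg hi, dif_neg hj, Fin.castPred_castSucc]
  by_cases p : i = v₁ ∧ j = v₂
  · have q : ¬(i = v₂ ∧ j = v₁) := fun q => hne (p.1.symm.trans q.1)
    split_ifs <;> simp_all
  · by_cases q : i = v₂ ∧ j = v₁
    · split_ifs <;> simp_all
    · rw [if_neg p, if_neg q, sub_zero, sub_zero]; exact (if_neg p).trans (if_neg q)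

lemma aux_P2 (hne : v₁ ≠ v₂) (i : Fin n) :
    breakLoop n x v₁ v₂ lam i.castSucc (Fin.last n) =
      (if i = v₁ then lam else 0) + (if i = v₂ then 1 - lam else 0) := by
  have hi := (Fin.castSucc_lt_last i).ne
  simp only [breakLoop]
  rw [dif_neg hi, dif_pos trivial]
  simp only [Fin.castPred_castSucc]
  by_cases p : i = v₁
  · have q : ¬ i = v₂ := fun q => hne (p.symm.trans q)
    split_ifs <;> simp_all
  · by_cases q : i = v₂
    · split_ifs <;> simp_all
    · split_ifs <;> simp_all

lemma aux_P3 (hne : v₁ ≠ v₂) (j : Fin n) :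
    breakLoop n x v₁ v₂ lam (Fin.last n) j.castSucc =
      (if j = v₂ then lam else 0) + (if j = v₁ then 1 - lam else 0) := by
  have hj := (Fin.castSucc_lt_last j).ne
  simp only [breakLoop]
  rw [dif_pos trivial, dif_neg hj]
  simp only [Fin.castPred_castSucc]
  by_cases p : j = v₂
  · have q : ¬ j = v₁ := fun q => hne (q.symm.trans p)
    split_ifs <;> simp_all
  · by_cases q : j = v₁
    · split_ifs <;> simp_all
    · split_ifs <;> simp_all

lemma aux_P4 : breakLoop n x v₁ v₂ lam (Fin.last n) (Fin.last n) = 0 := by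
  simp [breakLoop]

lemma aux_cut_singleton (hdiag : ∀ i, x i i = 0) (hrow : ∀ i, ∑ j, x i j = 1)
    (w : Fin n) : ∑ i ∈ ({w} : Finset (Fin n)), ∑ j ∈ ({w} : Finset (Fin n))ᶜ, x i j = 1 := by
  rw [Finset.sum_singleton]
  have h := Finset.sum_add_sum_compl ({w} : Finset (Fin n)) (fun j => x w j)
  rw [Finset.sum_singleton, hdiag w, hrow w] at h
  linarith

lemma aux_cut_cosingleton (hdiag : ∀ i, x i i = 0) (hcol : ∀ j, ∑ i, x i j = 1)
    (w : Fin n) : ∑ i ∈ (({w} : Finset (Fin n))ᶜ), ∑ j ∈ (({w} : Finset (Fin n))ᶜ)ᶜ, x i j = 1 := by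
  rw [compl_compl]
  have : ∀ i ∈ (({w} : Finset (Fin n))ᶜ), ∑ j ∈ ({w} : Finset (Fin n)), x i j = x i w := by
    intro i _; rw [Finset.sum_singleton]
  rw [Finset.sum_congr rfl this]
  have h := Finset.sum_add_sum_compl ({w} : Finset (Fin n)) (fun i => x i w)
  rw [Finset.sum_singleton, hdiag w, hcol w] at h
  linarith

end Helpers
section Helpers2

variable {n : ℕ} (x : Fin n → Fin n → ℝ) (v₁ v₂ : Fin n) (lam : ℝ)

lemma aux_sum_ind {α : Type*} [DecidableEq α] (A : Finset α) (a : α) (P : Prop)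
    [Decidable P] (c : ℝ) :
    ∑ i ∈ A, (if i = a ∧ P then c else 0) = if a ∈ A ∧ P then c else 0 := by
  by_cases hP : P
  · simp only [hP, and_true]
    exact Finset.sum_ite_eq' A a (fun _ => c)
  · simp [hP]

lemma aux_sum_ind2 {α : Type*} [DecidableEq α] (B : Finset α) (b : α) (P : Prop)
    [Decidable P] (c : ℝ) :
    ∑ j ∈ B, (if P ∧ j = b then c else 0) = if P ∧ b ∈ B then c else 0 := by
  by_cases hP : P
  · simp only [hP, true_and]
    exact Finset.sum_ite_eq' B b (fun _ => c)
  · simp [hP]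

end Helpers2
/-- If `x ∈ P_ASEP(n)` contains a `λ`-loop between `v₁` and `v₂`, then the point
`x' = x ↑^{v₃} (v₁,v₂)` obtained by the `λ`-loop breaking procedure belongs to
`P_ASEP(n+1)`. -/
theorem breakLoop_mem (n : ℕ) (x : Fin n → Fin n → ℝ) (hx : PASEP n x)
    (v₁ v₂ : Fin n) (hne : v₁ ≠ v₂) (lam : ℝ) (h0 : 0 < lam) (h1 : lam < 1)
    (ha : x v₁ v₂ = lam) (hb : x v₂ v₁ = 1 - lam) :
    PASEP (n + 1) (breakLoop n x v₁ v₂ lam) := by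
  obtain ⟨hnn, hdiag, hcol, hrow, hsub⟩ := hx
  refine ⟨?_, ?_, ?_, ?_, ?_⟩
  · -- nonnegativity
    intro u v
    simp only [breakLoop]
    split_ifs <;> first | linarith | exact hnn _ _
  · -- diagonal
    intro u
    refine Fin.lastCases ?_ (fun i => ?_) u
    · exact aux_P4 x v₁ v₂ lam
    · have c1 : ¬(i = v₁ ∧ i = v₂) := fun h => hne (h.1.symm.trans h.2)
      have c2 : ¬(i = v₂ ∧ i = v₁) := fun h => hne (h.2.symm.trans h.1)
      rw [aux_P1 x v₁ v₂ lam hne ha hb i i, if_neg c1, if_neg c2, hdiag i]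
      ring
  · -- column sums
    intro v
    refine Fin.lastCases ?_ (fun j => ?_) v
    · rw [Fin.sum_univ_castSucc,
        Finset.sum_congr rfl (fun i _ => aux_P2 x v₁ v₂ lam hne i),
        aux_P4, Finset.sum_add_distrib,
        Finset.sum_ite_eq' Finset.univ v₁ (fun _ => lam),
        Finset.sum_ite_eq' Finset.univ v₂ (fun _ => 1 - lam)]
      simp
    · rw [Fin.sum_univ_castSucc,
        Finset.sum_congr rfl (fun i _ => aux_P1 x v₁ v₂ lam hne ha hb i j),
        aux_P3 x v₁ v₂ lam hne j, Finset.sum_sub_distrib, Finset.sum_sub_distrib,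
        aux_sum_ind Finset.univ v₁ (j = v₂) lam,
        aux_sum_ind Finset.univ v₂ (j = v₁) (1 - lam), hcol j]
      simp only [Finset.mem_univ, true_and]
      split_ifs <;> ring
  · -- row sums
    intro u
    refine Fin.lastCases ?_ (fun i => ?_) u
    · rw [Fin.sum_univ_castSucc,
        Finset.sum_congr rfl (fun j _ => aux_P3 x v₁ v₂ lam hne j),
        aux_P4, Finset.sum_add_distrib,
        Finset.sum_ite_eq' Finset.univ v₂ (fun _ => lam),
        Finset.sum_ite_eq' Finset.univ v₁ (fun _ => 1 - lam)]
      simp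
    · rw [Fin.sum_univ_castSucc,
        Finset.sum_congr rfl (fun j _ => aux_P1 x v₁ v₂ lam hne ha hb i j),
        aux_P2 x v₁ v₂ lam hne i, Finset.sum_sub_distrib, Finset.sum_sub_distrib,
        aux_sum_ind2 Finset.univ v₂ (i = v₁) lam,
        aux_sum_ind2 Finset.univ v₁ (i = v₂) (1 - lam), hrow i]
      simp only [Finset.mem_univ, and_true]
      split_ifs <;> ring
  · -- subtour elimination
    intro S hc2 hcle
    obtain ⟨S₀, hS₀⟩ : ∃ T, T = Finset.univ.filter (fun i : Fin n => i.castSucc ∈ S) :=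
      ⟨_, rfl⟩
    have hfilter : Finset.univ.filter (fun j : Fin n => j.castSucc ∈ Sᶜ) = S₀ᶜ := by
      ext j
      simp [hS₀, Finset.mem_compl]
    -- inner sum formula for old rows
    have e1 : ∀ i : Fin n, ∑ j ∈ Sᶜ, breakLoop n x v₁ v₂ lam i.castSucc j
        = (∑ j ∈ S₀ᶜ, x i j)
          - (if i = v₁ ∧ v₂ ∈ S₀ᶜ then lam else 0)
          - (if i = v₂ ∧ v₁ ∈ S₀ᶜ then 1 - lam else 0)
          + (if Fin.last n ∈ S then 0
             else (if i = v₁ then lam else 0) + (if i = v₂ then 1 - lam else 0)) := by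
      intro i
      rw [aux_sum_split Sᶜ (fun j => breakLoop n x v₁ v₂ lam i.castSucc j), hfilter,
        Finset.sum_congr rfl (fun j _ => aux_P1 x v₁ v₂ lam hne ha hb i j),
        Finset.sum_sub_distrib, Finset.sum_sub_distrib,
        aux_sum_ind2 S₀ᶜ v₂ (i = v₁) lam,
        aux_sum_ind2 S₀ᶜ v₁ (i = v₂) (1 - lam),
        aux_P2 x v₁ v₂ lam hne i]
      by_cases hL' : Fin.last n ∈ S
      · simp [hL']
      · simp [hL', Finset.mem_compl]
    have e2 : ∑ j ∈ Sᶜ, breakLoop n x v₁ v₂ lam (Fin.last n) j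
        = (if v₂ ∈ S₀ᶜ then lam else 0) + (if v₁ ∈ S₀ᶜ then 1 - lam else 0) := by
      rw [aux_sum_split Sᶜ (fun j => breakLoop n x v₁ v₂ lam (Fin.last n) j), hfilter,
        Finset.sum_congr rfl (fun j _ => aux_P3 x v₁ v₂ lam hne j),
        Finset.sum_add_distrib,
        Finset.sum_ite_eq' S₀ᶜ v₂ (fun _ => lam),
        Finset.sum_ite_eq' S₀ᶜ v₁ (fun _ => 1 - lam), aux_P4]
      simp
    -- cardinality bookkeeping
    have himg : S₀.image Fin.castSucc = S.filter (fun a => a ≠ Fin.last n) := by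
      ext a
      simp only [Finset.mem_image, Finset.mem_filter, hS₀, Finset.mem_univ, true_and]
      constructor
      · rintro ⟨i, hi, rfl⟩
        exact ⟨hi, (Fin.castSucc_lt_last i).ne⟩
      · rintro ⟨haS, hane⟩
        obtain ⟨i, rfl⟩ := Fin.exists_castSucc_eq.mpr hane
        exact ⟨i, haS, rfl⟩
    have hcard : S.card = S₀.card + (if Fin.last n ∈ S then 1 else 0) := by
      have h2 := Finset.card_filter_add_card_filter_not
        (s := S) (p := fun a => a ≠ Fin.last n)
      have h3 : (S.filter (fun a => ¬ a ≠ Fin.last n)) = S.filter (fun a => a = Fin.last n) := by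
        apply Finset.filter_congr
        intro a _
        simp
      have h4 : (S.filter (fun a => a = Fin.last n)).card
          = if Fin.last n ∈ S then 1 else 0 := by
        rw [Finset.filter_eq']
        split_ifs <;> simp
      have h5 : S₀.card = (S.filter (fun a => a ≠ Fin.last n)).card := by
        rw [← himg, Finset.card_image_of_injective _ (Fin.castSucc_injective n)]
      rw [h3, h4] at h2
      rw [h5]
      omega
    have hcompl_card : S₀ᶜ.card = n - S₀.card := by
      simp [Finset.card_compl]
    have hS₀le : S₀.card ≤ n := Finset.card_le_univ S₀ |>.trans (by simp)
    have hcutnn : 0 ≤ ∑ i ∈ S₀, ∑ j ∈ S₀ᶜ, x i j :=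
      Finset.sum_nonneg fun i _ => Finset.sum_nonneg fun j _ => hnn i j
    by_cases hL : Fin.last n ∈ S
    · -- new node inside S
      have hM : ∑ i ∈ S, ∑ j ∈ Sᶜ, breakLoop n x v₁ v₂ lam i j
          = (∑ i ∈ S₀, ∑ j ∈ S₀ᶜ, x i j)
            - (if v₁ ∈ S₀ ∧ v₂ ∈ S₀ᶜ then lam else 0)
            - (if v₂ ∈ S₀ ∧ v₁ ∈ S₀ᶜ then 1 - lam else 0)
            + ((if v₂ ∈ S₀ᶜ then lam else 0) + (if v₁ ∈ S₀ᶜ then 1 - lam else 0)) := by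
        rw [aux_sum_split S (fun i => ∑ j ∈ Sᶜ, breakLoop n x v₁ v₂ lam i j), ← hS₀,
          if_pos hL, e2, Finset.sum_congr rfl (fun i _ => e1 i)]
        simp only [if_pos hL, add_zero]
        rw [Finset.sum_sub_distrib, Finset.sum_sub_distrib,
          aux_sum_ind S₀ v₁ (v₂ ∈ S₀ᶜ) lam,
          aux_sum_ind S₀ v₂ (v₁ ∈ S₀ᶜ) (1 - lam)]
      have hcard' : S.card = S₀.card + 1 := by rw [hcard, if_pos hL]
      by_cases m1 : v₁ ∈ S₀ <;> by_cases m2 : v₂ ∈ S₀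
      · have hkey : 1 ≤ ∑ i ∈ S₀, ∑ j ∈ S₀ᶜ, x i j := by
          apply hsub
          · exact Finset.one_lt_card.mpr ⟨v₁, m1, v₂, m2, hne⟩
          · omega
        rw [hM]
        simp only [Finset.mem_compl, m1, m2, not_true, and_false, if_false]
        linarith
      · have hkey : 1 ≤ ∑ i ∈ S₀, ∑ j ∈ S₀ᶜ, x i j := by
          rcases Nat.lt_or_ge S₀.card 2 with hc | hc
          · have hc1 : S₀.card = 1 := by
              have : 0 < S₀.card := Finset.card_pos.mpr ⟨v₁, m1⟩
              omega
            obtain ⟨w, hw⟩ := Finset.card_eq_one.mp hc1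
            have : v₁ = w := by simpa [hw] using m1
            rw [hw, ← this]
            exact (aux_cut_singleton x hdiag hrow v₁).ge
          · exact hsub S₀ hc (by omega)
        rw [hM]
        simp only [Finset.mem_compl, m1, m2, not_true, not_false_iff, and_true,
          and_false, if_false, if_true, true_and, false_and]
        linarith
      · have hkey : 1 ≤ ∑ i ∈ S₀, ∑ j ∈ S₀ᶜ, x i j := by
          rcases Nat.lt_or_ge S₀.card 2 with hc | hc
          · have hc1 : S₀.card = 1 := by
              have : 0 < S₀.card := Finset.card_pos.mpr ⟨v₂, m2⟩
              omega
            obtain ⟨w, hw⟩ := Finset.card_eq_one.mp hc1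
            have : v₂ = w := by simpa [hw] using m2
            rw [hw, ← this]
            exact (aux_cut_singleton x hdiag hrow v₂).ge
          · exact hsub S₀ hc (by omega)
        rw [hM]
        simp only [Finset.mem_compl, m1, m2, not_true, not_false_iff, and_true,
          and_false, if_false, if_true, true_and, false_and]
        linarith
      · rw [hM]
        simp only [Finset.mem_compl, m1, m2, not_false_iff, and_true, and_false,
          false_and, if_false, if_true]
        linarith
    · -- new node outside S
      have hM : ∑ i ∈ S, ∑ j ∈ Sᶜ, breakLoop n x v₁ v₂ lam i j
          = (∑ i ∈ S₀, ∑ j ∈ S₀ᶜ, x i j)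
            - (if v₁ ∈ S₀ ∧ v₂ ∈ S₀ᶜ then lam else 0)
            - (if v₂ ∈ S₀ ∧ v₁ ∈ S₀ᶜ then 1 - lam else 0)
            + ((if v₁ ∈ S₀ then lam else 0) + (if v₂ ∈ S₀ then 1 - lam else 0)) := by
        rw [aux_sum_split S (fun i => ∑ j ∈ Sᶜ, breakLoop n x v₁ v₂ lam i j), ← hS₀,
          if_neg hL, Finset.sum_congr rfl (fun i _ => e1 i)]
        simp only [if_neg hL, add_zero]
        rw [Finset.sum_add_distrib, Finset.sum_sub_distrib, Finset.sum_sub_distrib,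
          aux_sum_ind S₀ v₁ (v₂ ∈ S₀ᶜ) lam,
          aux_sum_ind S₀ v₂ (v₁ ∈ S₀ᶜ) (1 - lam),
          Finset.sum_add_distrib,
          Finset.sum_ite_eq' S₀ v₁ (fun _ => lam),
          Finset.sum_ite_eq' S₀ v₂ (fun _ => 1 - lam)]
      have hcard' : S.card = S₀.card := by rw [hcard, if_neg hL]; omega
      by_cases m1 : v₁ ∈ S₀ <;> by_cases m2 : v₂ ∈ S₀
      · rw [hM]
        simp only [Finset.mem_compl, m1, m2, not_true, and_false, if_false, if_true]
        linarith
      · have hkey : 1 ≤ ∑ i ∈ S₀, ∑ j ∈ S₀ᶜ, x i j := by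
          rcases Nat.lt_or_ge S₀.card (n - 1) with hc | hc
          · exact hsub S₀ (by omega) (by omega)
          · have hc1 : S₀ᶜ.card = 1 := by omega
            obtain ⟨w, hw⟩ := Finset.card_eq_one.mp hc1
            have hv2w : v₂ = w := by
              have : v₂ ∈ S₀ᶜ := Finset.mem_compl.mpr m2
              simpa [hw] using this
            have hS₀eq : S₀ = ({v₂} : Finset (Fin n))ᶜ := by
              rw [← compl_compl S₀, hw, hv2w]
            rw [hS₀eq]
            exact (aux_cut_cosingleton x hdiag hcol v₂).ge
        rw [hM]
        simp only [Finset.mem_compl, m1, m2, not_true, not_false_iff, and_true,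
          and_false, if_false, if_true, true_and, false_and]
        linarith
      · have hkey : 1 ≤ ∑ i ∈ S₀, ∑ j ∈ S₀ᶜ, x i j := by
          rcases Nat.lt_or_ge S₀.card (n - 1) with hc | hc
          · exact hsub S₀ (by omega) (by omega)
          · have hc1 : S₀ᶜ.card = 1 := by omega
            obtain ⟨w, hw⟩ := Finset.card_eq_one.mp hc1
            have hv1w : v₁ = w := by
              have : v₁ ∈ S₀ᶜ := Finset.mem_compl.mpr m1
              simpa [hw] using this
            have hS₀eq : S₀ = ({v₁} : Finset (Fin n))ᶜ := by
              rw [← compl_compl S₀, hw, hv1w]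
            rw [hS₀eq]
            exact (aux_cut_cosingleton x hdiag hcol v₁).ge
        rw [hM]
        simp only [Finset.mem_compl, m1, m2, not_true, not_false_iff, and_true,
          and_false, if_false, if_true, true_and, false_and]
        linarith
      · have hcc : 2 ≤ S₀ᶜ.card :=
          Finset.one_lt_card.mpr ⟨v₁, Finset.mem_compl.mpr m1, v₂, Finset.mem_compl.mpr m2, hne⟩
        have hkey : 1 ≤ ∑ i ∈ S₀, ∑ j ∈ S₀ᶜ, x i j := hsub S₀ (by omega) (by omega)
        rw [hM]
        simp only [Finset.mem_compl, m1, m2, not_false_iff, and_true, if_false]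
        linarith
end

section
/- Let S ⊂ V be a tight set for x ∈ P_ASEP(n), i.e., x(δ(S)) = 1. Then the collapsed point x↓_w(S), defined on the node set (V ∖ S) ∪ {w} by (x↓_w(S))_{uw} = ∑_{s∈S} x_{us}, (x↓_w(S))_{wv} = ∑_{s∈S} x_{sv}, and (x↓_w(S))_{uv} = x_{uv} for u,v ∉ S, belongs to P_ASEP(n − |S| + 1). -/
open Finset

/-- Collapsing the set `S` into a single node `w`. The new node set is
`(V ∖ S) ∪ {w}`, realized as `Fin (n - |S| + 1)`: the nodes outside `S` are
identified with `Fin (n - |S|)` via a bijection `e`, and `w` is the last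
element. Arcs into `w` collect `∑_{s∈S} x_{us}`, arcs out of `w` collect
`∑_{s∈S} x_{sv}`, and all other entries are unchanged. -/
def collapse (n : ℕ) (x : Fin n → Fin n → ℝ) (S : Finset (Fin n))
    (e : {i : Fin n // i ∉ S} ≃ Fin (n - S.card)) :
    Fin (n - S.card + 1) → Fin (n - S.card + 1) → ℝ := fun u v =>
  if hu : u = Fin.last (n - S.card) then
    (if hv : v = Fin.last (n - S.card) then 0
     else ∑ s ∈ S, x s ↑(e.symm (v.castPred hv)))
  else if hv : v = Fin.last (n - S.card) then
    ∑ s ∈ S, x ↑(e.symm (u.castPred hu)) s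
  else x ↑(e.symm (u.castPred hu)) ↑(e.symm (v.castPred hv))

section Aux

variable {n : ℕ} (S : Finset (Fin n)) (e : {i : Fin n // i ∉ S} ≃ Fin (n - S.card))

/-- The identification of `Fin (n - |S|)` with the nodes outside `S`. -/
def bmap (u : Fin (n - S.card)) : Fin n := (e.symm u : {i : Fin n // i ∉ S})

lemma bmap_not_mem (u : Fin (n - S.card)) : bmap S e u ∉ S := (e.symm u).2

lemma sum_bmap (g : Fin n → ℝ) : ∑ u, g (bmap S e u) = ∑ a ∈ Sᶜ, g a := by
  rw [Finset.sum_subtype Sᶜ (fun a => Finset.mem_compl) g]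
  exact Equiv.sum_comp e.symm (fun a : {i : Fin n // i ∉ S} => g ↑a)

/-- The inverse map: each old node goes to its collapsed node. -/
def gmap (a : Fin n) : Fin (n - S.card + 1) :=
  if h : a ∈ S then Fin.last _ else (e ⟨a, h⟩).castSucc

/-- The fiber of each collapsed node. -/
def Fset (u : Fin (n - S.card + 1)) : Finset (Fin n) :=
  if h : u = Fin.last _ then S else {bmap S e (u.castPred h)}

lemma mem_Fset (a : Fin n) (u : Fin (n - S.card + 1)) :
    a ∈ Fset S e u ↔ gmap S e a = u := by
  by_cases hu : u = Fin.last _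
  · subst hu
    by_cases ha : a ∈ S
    · simp [Fset, gmap, ha]
    · simp [Fset, gmap, ha, (Fin.castSucc_lt_last _).ne]
  · by_cases ha : a ∈ S
    · simp only [Fset, gmap, dif_neg hu, dif_pos ha, Finset.mem_singleton]
      constructor
      · intro h; exact absurd (h ▸ ha) (bmap_not_mem S e _)
      · intro h; exact absurd h.symm hu
    · simp only [Fset, gmap, dif_neg hu, dif_neg ha, Finset.mem_singleton]
      constructor
      · intro h
        have h1 : u.castPred hu = e ⟨a, ha⟩ := by
          rw [← Equiv.apply_symm_apply e (u.castPred hu)]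
          congr 1
          exact Subtype.ext h.symm
        rw [← h1, Fin.castSucc_castPred]
      · intro h
        subst h
        rw [bmap, Fin.castPred_castSucc, Equiv.symm_apply_apply]

lemma Fset_disjoint {u v : Fin (n - S.card + 1)} (huv : u ≠ v) :
    Disjoint (Fset S e u) (Fset S e v) := by
  rw [Finset.disjoint_left]
  intro a hau hav
  rw [mem_Fset] at hau hav
  exact huv (hau ▸ hav)

lemma mem_biUnion_Fset (T : Finset (Fin (n - S.card + 1))) (a : Fin n) :
    a ∈ T.biUnion (Fset S e) ↔ gmap S e a ∈ T := by
  simp only [Finset.mem_biUnion, mem_Fset]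
  constructor
  · rintro ⟨u, hu, rfl⟩; exact hu
  · intro h; exact ⟨_, h, rfl⟩

lemma biUnion_Fset_compl (T : Finset (Fin (n - S.card + 1))) :
    Tᶜ.biUnion (Fset S e) = (T.biUnion (Fset S e))ᶜ := by
  ext a
  rw [mem_biUnion_Fset, Finset.mem_compl, Finset.mem_compl, mem_biUnion_Fset]

lemma card_Fset (u : Fin (n - S.card + 1)) :
    (Fset S e u).card = if u = Fin.last _ then S.card else 1 := by
  unfold Fset
  split_ifs <;> simp

lemma collapse_eq_sum (x : Fin n → Fin n → ℝ) {u v : Fin (n - S.card + 1)}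
    (huv : u ≠ v) :
    collapse n x S e u v = ∑ a ∈ Fset S e u, ∑ c ∈ Fset S e v, x a c := by
  by_cases hu : u = Fin.last _ <;> by_cases hv : v = Fin.last _
  · exact absurd (hu.trans hv.symm) huv
  · simp [collapse, Fset, hu, hv, bmap]
  · simp [collapse, Fset, hu, hv, bmap]
  · simp [collapse, Fset, hu, hv, bmap]

end Aux

/-- If `S` is a tight set for `x ∈ P_ASEP(n)` (i.e. `x(δ(S)) = 1`), then the
collapsed point `x ↓_w (S)` belongs to `P_ASEP(n − |S| + 1)`. -/
theorem collapse_mem (n : ℕ) (x : Fin n → Fin n → ℝ) (hx : PASEP n x)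
    (S : Finset (Fin n)) (h2 : 2 ≤ S.card) (h3 : S.card ≤ n - 2)
    (htight : ∑ i ∈ S, ∑ j ∈ Sᶜ, x i j = 1)
    (e : {i : Fin n // i ∉ S} ≃ Fin (n - S.card)) :
    PASEP (n - S.card + 1) (collapse n x S e) := by
  obtain ⟨hpos, hdiag, hcol, hrow, hsub⟩ := hx
  have hcardn : S.card ≤ n := by
    simpa using Finset.card_le_univ S
  -- evaluation lemmas
  have hcc : ∀ u v : Fin (n - S.card),
      collapse n x S e u.castSucc v.castSucc = x (bmap S e u) (bmap S e v) := by
    intro u v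
    simp [collapse, (Fin.castSucc_lt_last u).ne, (Fin.castSucc_lt_last v).ne, bmap]
  have hcw : ∀ u : Fin (n - S.card),
      collapse n x S e u.castSucc (Fin.last _) = ∑ s ∈ S, x (bmap S e u) s := by
    intro u
    simp [collapse, (Fin.castSucc_lt_last u).ne, bmap]
  have hwc : ∀ v : Fin (n - S.card),
      collapse n x S e (Fin.last _) v.castSucc = ∑ s ∈ S, x s (bmap S e v) := by
    intro v
    simp [collapse, (Fin.castSucc_lt_last v).ne, bmap]
  have hww : collapse n x S e (Fin.last _) (Fin.last _) = 0 := by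
    simp [collapse]
  -- derived equalities
  have hSS : ∑ i ∈ S, ∑ j ∈ S, x i j = (S.card : ℝ) - 1 := by
    have h1 : ∑ i ∈ S, (∑ j ∈ S, x i j + ∑ j ∈ Sᶜ, x i j) = (S.card : ℝ) := by
      simp only [Finset.sum_add_sum_compl, hrow]
      simp
    rw [Finset.sum_add_distrib, htight] at h1
    linarith
  have hrevtight : ∑ i ∈ Sᶜ, ∑ j ∈ S, x i j = 1 := by
    have h1 : ∑ j ∈ S, (∑ i ∈ S, x i j + ∑ i ∈ Sᶜ, x i j) = (S.card : ℝ) := by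
      simp only [Finset.sum_add_sum_compl, hcol]
      simp
    rw [Finset.sum_add_distrib] at h1
    rw [Finset.sum_comm] at h1
    rw [hSS] at h1
    rw [Finset.sum_comm]
    linarith
  refine ⟨?_, ?_, ?_, ?_, ?_⟩
  · -- nonnegativity
    intro i j
    unfold collapse
    split_ifs
    · exact le_refl 0
    · exact Finset.sum_nonneg fun s _ => hpos _ _
    · exact Finset.sum_nonneg fun s _ => hpos _ _
    · exact hpos _ _
  · -- diagonal
    intro i
    unfold collapse
    split_ifs
    · rfl
    · exact hdiag _
  · -- column sums
    intro j
    by_cases hj : j = Fin.last _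
    · subst hj
      rw [Fin.sum_univ_castSucc]
      simp only [hcw, hww, add_zero]
      rw [sum_bmap S e (fun a => ∑ s ∈ S, x a s)]
      exact hrevtight
    · rw [← Fin.castSucc_castPred j hj]
      rw [Fin.sum_univ_castSucc]
      simp only [hcc, hwc]
      rw [sum_bmap S e (fun a => x a (bmap S e (j.castPred hj)))]
      rw [Finset.sum_compl_add_sum]
      exact hcol _
  · -- row sums
    intro i
    by_cases hi : i = Fin.last _
    · subst hi
      rw [Fin.sum_univ_castSucc]
      simp only [hwc, hww, add_zero]
      rw [sum_bmap S e (fun a => ∑ s ∈ S, x s a), Finset.sum_comm]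
      exact htight
    · rw [← Fin.castSucc_castPred i hi]
      rw [Fin.sum_univ_castSucc]
      simp only [hcc, hcw]
      rw [sum_bmap S e (fun a => x (bmap S e (i.castPred hi)) a)]
      rw [Finset.sum_compl_add_sum]
      exact hrow _
  · -- subtour elimination
    intro T hT2 hT3
    set T' : Finset (Fin n) := T.biUnion (Fset S e) with hT'
    have hdisjT : ∀ (U : Finset (Fin (n - S.card + 1))),
        (↑U : Set (Fin (n - S.card + 1))).PairwiseDisjoint (Fset S e) :=
      fun U u _ v _ huv => Fset_disjoint S e huv
    have hcut : ∑ i ∈ T, ∑ j ∈ Tᶜ, collapse n x S e i j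
        = ∑ a ∈ T', ∑ c ∈ T'ᶜ, x a c := by
      calc ∑ i ∈ T, ∑ j ∈ Tᶜ, collapse n x S e i j
          = ∑ i ∈ T, ∑ j ∈ Tᶜ, ∑ a ∈ Fset S e i, ∑ c ∈ Fset S e j, x a c := by
            refine Finset.sum_congr rfl fun i hi => Finset.sum_congr rfl fun j hj => ?_
            have hij : i ≠ j := fun h => (Finset.mem_compl.mp hj) (h ▸ hi)
            exact collapse_eq_sum S e x hij
        _ = ∑ i ∈ T, ∑ a ∈ Fset S e i, ∑ j ∈ Tᶜ, ∑ c ∈ Fset S e j, x a c := by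
            exact Finset.sum_congr rfl fun i _ => Finset.sum_comm
        _ = ∑ a ∈ T', ∑ j ∈ Tᶜ, ∑ c ∈ Fset S e j, x a c :=
            (Finset.sum_biUnion (hdisjT T)).symm
        _ = ∑ a ∈ T', ∑ c ∈ Tᶜ.biUnion (Fset S e), x a c :=
            Finset.sum_congr rfl fun a _ => (Finset.sum_biUnion (hdisjT Tᶜ)).symm
        _ = ∑ a ∈ T', ∑ c ∈ T'ᶜ, x a c := by rw [biUnion_Fset_compl]
    have hcardT' : T'.card = ∑ u ∈ T, (Fset S e u).card :=
      Finset.card_biUnion fun u _ v _ huv => Fset_disjoint S e huv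
    have hbounds : 2 ≤ T'.card ∧ T'.card ≤ n - 2 := by
      by_cases hw : Fin.last (n - S.card) ∈ T
      · have hsum : ∑ u ∈ T, (Fset S e u).card
            = S.card + ∑ u ∈ T.erase (Fin.last _), (Fset S e u).card := by
          rw [← Finset.add_sum_erase _ _ hw, card_Fset, if_pos rfl]
        have herase : ∑ u ∈ T.erase (Fin.last _), (Fset S e u).card
            = T.card - 1 := by
          rw [Finset.sum_congr rfl (fun u hu => ?_), Finset.sum_const, smul_eq_mul,
            mul_one, Finset.card_erase_of_mem hw]
          rw [card_Fset, if_neg (Finset.ne_of_mem_erase hu)]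
        rw [hcardT', hsum, herase]
        omega
      · have hsum : ∑ u ∈ T, (Fset S e u).card = T.card := by
          rw [Finset.sum_congr rfl (fun u hu => ?_), Finset.sum_const, smul_eq_mul,
            mul_one]
          rw [card_Fset, if_neg (fun h : u = Fin.last _ => hw (h ▸ hu))]
        rw [hcardT', hsum]
        omega
    rw [hcut]
    exact hsub T' hbounds.1 hbounds.2
end

section
/- Let c̄ be obtained from an ATSP cost matrix c on n nodes by setting diagonal entries to −M, and let the 2n × 2n symmetric instance C̃ be built with blocks [c̄, U; U, c̄] (U all-infinite, interpreted as forbidden edges), then all finite costs shifted by +M. Then the optimal ATSP tour value satisfies ATSP(c) = STSP(c̃) − nM, where STSP(c̃) is the optimal symmetric TSP value of the transformed instance. -/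
open Finset

/-- The optimal value of the ATSP with cost `c`: the minimum of `∑ i, c i (σ i)`
over cyclic permutations `σ` (directed Hamiltonian cycles) of the `n` nodes. -/
noncomputable def ATSPval (n : ℕ) (c : Fin n → Fin n → ℝ) : ℝ :=
  sInf {v | ∃ σ : Equiv.Perm (Fin n), (∀ i j, σ.SameCycle i j) ∧
    v = ∑ i, c i (σ i)}

/-- In the Jonker–Volgenant transformation, an edge of the `2n`-node symmetric
instance (node set `Fin n ⊕ Fin n`, where `Sum.inr j` plays the role of `j + n`)
is allowed iff its endpoints lie in different halves; edges within a half are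
forbidden (infinite cost). -/
def jvAllowed (n : ℕ) : Fin n ⊕ Fin n → Fin n ⊕ Fin n → Prop
  | Sum.inl _, Sum.inr _ => True
  | Sum.inr _, Sum.inl _ => True
  | _, _ => False

/-- The (shifted) symmetric cost of the Jonker–Volgenant transformation: the
edge `{i, j+n}` costs `c_{ji} + M` for `i ≠ j` (coming from `c̄_{ji}` shifted by
`+M`) and the edge `{i, i+n}` costs `0` (originally `−M`, shifted by `+M`). -/
def jvCost (n : ℕ) (c : Fin n → Fin n → ℝ) (M : ℝ) :
    Fin n ⊕ Fin n → Fin n ⊕ Fin n → ℝ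
  | Sum.inl i, Sum.inr j => if i = j then 0 else c j i + M
  | Sum.inr j, Sum.inl i => if i = j then 0 else c j i + M
  | _, _ => 0

/-- The optimal value of the transformed symmetric TSP: the minimum cost of an
undirected Hamiltonian cycle on the `2n` nodes using only allowed edges. -/
noncomputable def STSPval (n : ℕ) (c : Fin n → Fin n → ℝ) (M : ℝ) : ℝ :=
  sInf {v | ∃ τ : Equiv.Perm (Fin n ⊕ Fin n), (∀ a b, τ.SameCycle a b) ∧
    (∀ a, jvAllowed n a (τ a)) ∧ v = ∑ a, jvCost n c M a (τ a)}

/-! ### Auxiliary lemmas -/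

open Fin.NatCast in
lemma jvAux_addLeft_pow (n : ℕ) [NeZero n] (m : ℕ) (x : Fin n) :
    ((Equiv.addLeft (1 : Fin n)) ^ m) x = (m : Fin n) + x := by
  induction m with
  | zero => simp
  | succ m ih =>
    rw [pow_succ', Equiv.Perm.mul_apply, ih]
    push_cast
    simp [Equiv.addLeft]
    abel

open Fin.NatCast in
/-- A cyclic permutation of `Fin n` exists. -/
lemma jvAux_exists_cyclic (n : ℕ) (hn : 2 ≤ n) :
    ∃ σ : Equiv.Perm (Fin n), ∀ i j, σ.SameCycle i j := by
  haveI : NeZero n := ⟨by omega⟩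
  refine ⟨Equiv.addLeft 1, fun i j => ⟨(((j - i : Fin n)).val : ℤ), ?_⟩⟩
  rw [zpow_natCast, jvAux_addLeft_pow]
  simp [Fin.cast_val_eq_self]

/-- A permutation all of whose points are on one cycle has no fixed points
(when there are at least two points). -/
lemma jvAux_no_fixed {n : ℕ} (hn : 2 ≤ n) (σ : Equiv.Perm (Fin n))
    (hσ : ∀ i j, σ.SameCycle i j) (i : Fin n) : σ i ≠ i := by
  intro h
  obtain ⟨j, hj⟩ := Fintype.exists_ne_of_one_lt_card (by simp; omega) i
  obtain ⟨k, hk⟩ := hσ i j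
  have : (σ ^ k) i = i := by
    apply Equiv.Perm.zpow_apply_eq_self_of_apply_eq_self h
  exact hj (hk ▸ this)

/-- If `τ` swaps `a` and `b` then the orbit of `a` is `{a, b}`. -/
lemma jvAux_pair_orbit {α : Type*} (τ : Equiv.Perm α) (a b : α)
    (h1 : τ a = b) (h2 : τ b = a) :
    ∀ k : ℤ, (τ ^ k) a = a ∨ (τ ^ k) a = b := by
  have hfwd : ∀ m : ℕ, ∀ x, (x = a ∨ x = b) →
      ((τ ^ m) x = a ∨ (τ ^ m) x = b) := by
    intro m
    induction m with
    | zero => intro x hx; simpa using hx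
    | succ m ih =>
      intro x hx
      rw [pow_succ, Equiv.Perm.mul_apply]
      apply ih
      rcases hx with h | h <;> subst h <;> simp [h1, h2]
  have h1' : τ⁻¹ a = b := by rw [← h2]; simp
  have h2' : τ⁻¹ b = a := by rw [← h1]; simp
  have hbwd : ∀ m : ℕ, ∀ x, (x = a ∨ x = b) →
      ((τ⁻¹ ^ m) x = a ∨ (τ⁻¹ ^ m) x = b) := by
    intro m
    induction m with
    | zero => intro x hx; simpa using hx
    | succ m ih =>
      intro x hx
      rw [pow_succ, Equiv.Perm.mul_apply]
      apply ih
      rcases hx with h | h <;> subst h <;> simp [h1', h2']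
  intro k
  rcases k with m | m
  · simpa using hfwd m a (Or.inl rfl)
  · rw [zpow_negSucc, ← inv_pow]
    exact hbwd (m + 1) a (Or.inl rfl)

lemma jvAux_cost_nonneg (n : ℕ) (c : Fin n → Fin n → ℝ)
    (hc : ∀ i j, 0 ≤ c i j) (M : ℝ) (hM0 : 0 ≤ M) :
    ∀ a b, 0 ≤ jvCost n c M a b := by
  have h : ∀ i j : Fin n, (0:ℝ) ≤ if i = j then 0 else c j i + M := by
    intro i j
    split_ifs with hij
    · exact le_rfl
    · linarith [hc j i]
  rintro (i | i) (j | j)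
  · exact le_rfl
  · exact h i j
  · exact h j i
  · exact le_rfl

/-- Forward direction: from a directed tour we get a symmetric tour. -/
lemma jvAux_forward (n : ℕ) (hn : 2 ≤ n) (c : Fin n → Fin n → ℝ) (M : ℝ)
    (σ : Equiv.Perm (Fin n)) (hσ : ∀ i j, σ.SameCycle i j) :
    ∃ τ : Equiv.Perm (Fin n ⊕ Fin n), (∀ a b, τ.SameCycle a b) ∧
      (∀ a, jvAllowed n a (τ a)) ∧
      (∑ a, jvCost n c M a (τ a)) = (∑ i, c i (σ i)) + n * M := by
  classical
  let τ : Equiv.Perm (Fin n ⊕ Fin n) :=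
    { toFun := Sum.elim (fun i => Sum.inr i) (fun i => Sum.inl (σ i))
      invFun := Sum.elim (fun j => Sum.inr (σ.symm j)) (fun i => Sum.inl i)
      left_inv := by rintro (i | i) <;> simp
      right_inv := by rintro (i | i) <;> simp }
  have hτl : ∀ i, τ (Sum.inl i) = Sum.inr i := fun i => rfl
  have hτr : ∀ i, τ (Sum.inr i) = Sum.inl (σ i) := fun i => rfl
  have h2 : ∀ k : ℤ, τ ^ (2 * k) = Equiv.sumCongr (σ ^ k) (σ ^ k) := by
    intro k
    have h0 : τ ^ (2 : ℤ) = Equiv.Perm.sumCongrHom _ _ (σ, σ) := by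
      have : τ ^ (2 : ℤ) = τ * τ := by rw [zpow_two]
      rw [this]
      ext a
      rcases a with i | i <;>
        simp [Equiv.Perm.sumCongrHom, hτl, hτr, Equiv.Perm.mul_apply]
    calc τ ^ (2 * k) = (τ ^ (2 : ℤ)) ^ k := by rw [zpow_mul]
      _ = (Equiv.Perm.sumCongrHom _ _ (σ, σ)) ^ k := by rw [h0]
      _ = Equiv.Perm.sumCongrHom _ _ ((σ, σ) ^ k) := (map_zpow _ _ _).symm
      _ = Equiv.sumCongr (σ ^ k) (σ ^ k) := by
          simp [Equiv.Perm.sumCongrHom, Prod.pow_def]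
  have hll : ∀ i j, τ.SameCycle (Sum.inl i) (Sum.inl j) := by
    intro i j
    obtain ⟨k, hk⟩ := hσ i j
    exact ⟨2 * k, by rw [h2]; simp [hk]⟩
  have hlr : ∀ j, τ.SameCycle (Sum.inl j) (Sum.inr j) := fun j => ⟨1, by simp [hτl]⟩
  have hcyc : ∀ a b : Fin n ⊕ Fin n, τ.SameCycle a b := by
    rintro (i | i) (j | j)
    · exact hll i j
    · exact (hll i j).trans (hlr j)
    · exact ((hll j i).trans (hlr i)).symm
    · exact ((hlr i).symm.trans (hll i j)).trans (hlr j)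
  have hfix : ∀ i, σ i ≠ i := jvAux_no_fixed hn σ hσ
  refine ⟨τ, hcyc, by rintro (i | i) <;> simp [hτl, hτr, jvAllowed], ?_⟩
  rw [Fintype.sum_sum_type]
  have e1 : ∀ i, jvCost n c M (Sum.inl i) (τ (Sum.inl i)) = 0 := by
    intro i; rw [hτl]; simp [jvCost]
  have e2 : ∀ i, jvCost n c M (Sum.inr i) (τ (Sum.inr i)) = c i (σ i) + M := by
    intro i; rw [hτr]; simp [jvCost, hfix i]
  simp only [e1, e2, Finset.sum_const_zero, zero_add, Finset.sum_add_distrib,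
    Finset.sum_const, Finset.card_univ, Fintype.card_fin, nsmul_eq_mul]

/-- Backward direction: from a symmetric tour we get a directed tour of cost
at most the symmetric cost minus `n * M`. -/
lemma jvAux_backward (n : ℕ) (hn : 2 ≤ n) (c : Fin n → Fin n → ℝ)
    (hc : ∀ i j, 0 ≤ c i j) (M : ℝ) (hM : ∑ i, ∑ j, c i j < M)
    (τ : Equiv.Perm (Fin n ⊕ Fin n)) (hcyc : ∀ a b, τ.SameCycle a b)
    (hall : ∀ a, jvAllowed n a (τ a)) :
    ∃ σ : Equiv.Perm (Fin n), (∀ i j, σ.SameCycle i j) ∧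
      (∑ i, c i (σ i)) + n * M ≤ ∑ a, jvCost n c M a (τ a) := by
  classical
  have hM0 : 0 ≤ M := le_of_lt (lt_of_le_of_lt
    (Finset.sum_nonneg fun i _ => Finset.sum_nonneg fun j _ => hc i j) hM)
  -- extract f and g
  have hf' : ∀ i, ∃ j, τ (Sum.inl i) = Sum.inr j := by
    intro i
    have h := hall (Sum.inl i)
    rcases hh : τ (Sum.inl i) with j | j
    · rw [hh] at h; exact absurd h (by simp [jvAllowed])
    · exact ⟨j, rfl⟩
  have hg' : ∀ i, ∃ j, τ (Sum.inr i) = Sum.inl j := by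
    intro i
    have h := hall (Sum.inr i)
    rcases hh : τ (Sum.inr i) with j | j
    · exact ⟨j, rfl⟩
    · rw [hh] at h; exact absurd h (by simp [jvAllowed])
  choose f hf using hf'
  choose g hg using hg'
  have finj : Function.Injective f := by
    intro i j hij
    have : τ (Sum.inl i) = τ (Sum.inl j) := by rw [hf, hf, hij]
    simpa using τ.injective this
  have ginj : Function.Injective g := by
    intro i j hij
    have : τ (Sum.inr i) = τ (Sum.inr j) := by rw [hg, hg, hij]
    simpa using τ.injective this
  -- never both fixed
  have hnotboth : ∀ i, ¬(f i = i ∧ g i = i) := by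
    rintro i ⟨hfi, hgi⟩
    have h1 : τ (Sum.inl i) = Sum.inr i := by rw [hf, hfi]
    have h2 : τ (Sum.inr i) = Sum.inl i := by rw [hg, hgi]
    have horb := jvAux_pair_orbit τ (Sum.inl i) (Sum.inr i) h1 h2
    obtain ⟨j, hj⟩ := Fintype.exists_ne_of_one_lt_card
      (α := Fin n) (by simp; omega) i
    obtain ⟨k, hk⟩ := hcyc (Sum.inl i) (Sum.inl j)
    rcases horb k with h | h <;> rw [hk] at h <;> simp_all
  set Qf : Finset (Fin n) := univ.filter (fun i => f i ≠ i) with hQf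
  set Qg : Finset (Fin n) := univ.filter (fun i => g i ≠ i) with hQg
  have hcover' : ∀ i : Fin n, f i ≠ i ∨ g i ≠ i := by
    intro i
    by_contra h
    push_neg at h
    exact hnotboth i ⟨h.1, h.2⟩
  have hcover : Qf ∪ Qg = univ := by
    ext i
    simp only [hQf, hQg, Finset.mem_union, Finset.mem_filter, Finset.mem_univ,
      true_and, iff_true]
    exact hcover' i
  have hcard : n ≤ Qf.card + Qg.card := by
    calc n = (univ : Finset (Fin n)).card := by simp
      _ = (Qf ∪ Qg).card := by rw [hcover]
      _ ≤ Qf.card + Qg.card := Finset.card_union_le _ _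
  -- cost formula
  have hw : ∑ a, jvCost n c M a (τ a) =
      (∑ i ∈ Qf, (c (f i) i + M)) + (∑ i ∈ Qg, (c i (g i) + M)) := by
    rw [Fintype.sum_sum_type]
    congr 1
    · rw [Finset.sum_filter]
      apply Finset.sum_congr rfl
      intro i _
      rw [hf]
      simp only [jvCost]
      by_cases h : f i = i
      · simp [h]
      · rw [if_neg (fun e => h e.symm), if_pos h]
    · rw [Finset.sum_filter]
      apply Finset.sum_congr rfl
      intro i _
      rw [hg]
      simp only [jvCost]
      by_cases h : g i = i
      · simp [h]
      · rw [if_neg h, if_pos h]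
  by_cases hcase : Qf.card + Qg.card = n
  · -- exactly n nonzero edges: extract the directed tour
    have hdisj : ∀ i, ¬(f i ≠ i ∧ g i ≠ i) := by
      intro i hi
      have hinter : (Qf ∩ Qg).card = 0 := by
        have := Finset.card_union_add_card_inter Qf Qg
        rw [hcover] at this
        simp only [Finset.card_univ, Fintype.card_fin] at this
        omega
      have : i ∈ Qf ∩ Qg := by
        simp [hQf, hQg, Finset.mem_inter, hi.1, hi.2]
      rw [Finset.card_eq_zero] at hinter
      simp [hinter] at this
    have hexact : ∀ i, (f i = i ↔ g i ≠ i) := by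
      intro i
      constructor
      · intro h hg'
        exact hnotboth i ⟨h, hg'⟩
      · intro h
        by_contra hfi
        exact hdisj i ⟨hfi, h⟩
    -- f maps Qf into Qf
    have hfQf : ∀ i, f i ≠ i → f (f i) ≠ f i := by
      intro i hi h
      exact hi (finj h)
    set F : Equiv.Perm (Fin n) := Equiv.ofBijective f
      (Finite.injective_iff_bijective.mp finj) with hF
    have hFapp : ∀ i, F i = f i := fun i => rfl
    have hFsymm : ∀ i, f (F.symm i) = i := fun i => F.apply_symm_apply i
    have hsymm_ne : ∀ j, f j ≠ j → f (F.symm j) ≠ F.symm j := by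
      intro j hjne h
      apply hjne
      have hfu : f (F.symm j) = j := hFsymm j
      rw [hfu] at h
      rw [← h] at hfu
      exact hfu
    -- the directed tour
    set ρ : Fin n → Fin n := fun i => if f i = i then g i else F.symm i with hρ
    have ρinj : Function.Injective ρ := by
      intro i j hij
      simp only [hρ] at hij
      by_cases hi : f i = i <;> by_cases hj : f j = j <;>
          simp only [hi, hj, if_pos, if_neg, if_true, if_false] at hij
      · exact ginj hij
      · -- g i = F.symm j, j moved
        exfalso
        have hgu : g (F.symm j) = F.symm j := by
          by_contra h
          exact hdisj _ ⟨hsymm_ne j hj, h⟩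
        have hiu : i = F.symm j := ginj (by rw [hij, hgu])
        have hgi : g i ≠ i := (hexact i).mp hi
        rw [hiu] at hgi
        exact hgi hgu
      · -- symmetric
        exfalso
        have hgu : g (F.symm i) = F.symm i := by
          by_contra h
          exact hdisj _ ⟨hsymm_ne i hi, h⟩
        have hju : j = F.symm i := ginj (by rw [← hij, hgu])
        have hgj : g j ≠ j := (hexact j).mp hj
        rw [hju] at hgj
        exact hgj hgu
      · exact F.symm.injective hij
    set P : Equiv.Perm (Fin n) := Equiv.ofBijective ρ
      (Finite.injective_iff_bijective.mp ρinj) with hP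
    have hPapp : ∀ i, P i = ρ i := fun i => rfl
    -- P is cyclic
    have hstep : ∀ a, P.SameCycle (Sum.elim id id a)
        (Sum.elim id id (τ a)) := by
      rintro (i | i)
      · rw [hf]
        simp only [Sum.elim_inl, Sum.elim_inr, id_eq]
        by_cases h : f i = i
        · rw [h]
        · refine (Equiv.Perm.SameCycle.symm ⟨1, ?_⟩)
          simp only [zpow_one, hPapp, hρ]
          rw [if_neg (hfQf i h)]
          exact F.symm_apply_apply i
      · rw [hg]
        simp only [Sum.elim_inl, Sum.elim_inr, id_eq]
        by_cases h : g i = i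
        · rw [h]
        · refine ⟨1, ?_⟩
          simp only [zpow_one, hPapp, hρ]
          rw [if_pos ((hexact i).mpr h)]
    have hiter : ∀ m : ℕ, ∀ a, P.SameCycle (Sum.elim id id a)
        (Sum.elim id id ((τ ^ m) a)) := by
      intro m
      induction m with
      | zero => intro a; simpa using Equiv.Perm.SameCycle.refl P _
      | succ m ih =>
        intro a
        rw [pow_succ, Equiv.Perm.mul_apply]
        exact (hstep a).trans (ih (τ a))
    have hPcyc : ∀ i j, P.SameCycle i j := by
      intro i j
      obtain ⟨k, hk⟩ := hcyc (Sum.inl i) (Sum.inl j)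
      rcases k with m | m
      · have := hiter m (Sum.inl i)
        rw [show ((Int.ofNat m : ℤ)) = (m : ℤ) from rfl, zpow_natCast] at hk
        rw [hk] at this
        simpa using this
      · have hk' : (τ ^ (m + 1)) (Sum.inl j) = Sum.inl i := by
          rw [zpow_negSucc] at hk
          have := congrArg (τ ^ (m + 1)) hk
          rw [Equiv.Perm.inv_def, Equiv.apply_symm_apply] at this
          exact this.symm
        have := hiter (m + 1) (Sum.inl j)
        rw [hk'] at this
        simpa using this.symm
    refine ⟨P, hPcyc, ?_⟩
    -- cost identity
    have hQgcompl : Qg = univ.filter (fun i => f i = i) := by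
      ext i
      simp only [hQg, Finset.mem_filter, Finset.mem_univ, true_and]
      exact ⟨fun h => (hexact i).mpr h, fun h => (hexact i).mp h⟩
    have hsum : ∑ i, c i (P i) = (∑ i ∈ Qg, c i (g i)) + ∑ i ∈ Qf, c (f i) i := by
      rw [← Finset.sum_filter_add_sum_filter_not univ (fun i => f i = i)
        (fun i => c i (P i))]
      congr 1
      · rw [hQgcompl]
        apply Finset.sum_congr rfl
        intro i hi
        simp only [Finset.mem_filter] at hi
        simp [hPapp, hρ, hi.2]
      · have hQfeq : univ.filter (fun i => ¬ f i = i) = Qf := rfl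
        rw [hQfeq]
        refine Finset.sum_nbij' (fun i => F.symm i) (fun j => f j) ?_ ?_ ?_ ?_ ?_
        · intro i hi
          simp only [hQf, Finset.mem_filter, Finset.mem_univ, true_and] at hi ⊢
          exact hsymm_ne i hi
        · intro j hj
          simp only [hQf, Finset.mem_filter, Finset.mem_univ, true_and] at hj ⊢
          exact hfQf j hj
        · intro i _
          exact hFsymm i
        · intro j _
          exact F.symm_apply_apply j
        · intro i hi
          simp only [hQf, Finset.mem_filter, Finset.mem_univ, true_and] at hi
          have h1 : P i = F.symm i := by simp [hPapp, hρ, hi]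
          rw [h1, hFsymm]
    rw [hw, hsum]
    have hcards : (Qf.card : ℝ) * M + (Qg.card : ℝ) * M = n * M := by
      rw [← add_mul]
      congr 1
      rw [← Nat.cast_add, hcase]
    rw [Finset.sum_add_distrib, Finset.sum_add_distrib, Finset.sum_const,
      Finset.sum_const, nsmul_eq_mul, nsmul_eq_mul]
    linarith [hcards]
  · -- at least n+1 nonzero edges: use any tour, cost below M + n*M
    obtain ⟨σ, hσ⟩ := jvAux_exists_cyclic n hn
    refine ⟨σ, hσ, ?_⟩
    have hv : ∑ i, c i (σ i) ≤ ∑ i, ∑ j, c i j := by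
      apply Finset.sum_le_sum
      intro i _
      exact Finset.single_le_sum (fun j _ => hc i j) (Finset.mem_univ _)
    have hcard' : n + 1 ≤ Qf.card + Qg.card := by omega
    have hwge : ((n : ℝ) + 1) * M ≤ ∑ a, jvCost n c M a (τ a) := by
      rw [hw]
      have h1 : (Qf.card : ℝ) * M ≤ ∑ i ∈ Qf, (c (f i) i + M) := by
        calc (Qf.card : ℝ) * M = ∑ _i ∈ Qf, M := by
              rw [Finset.sum_const, nsmul_eq_mul]
          _ ≤ _ := Finset.sum_le_sum (fun i _ => by linarith [hc (f i) i])
      have h2 : (Qg.card : ℝ) * M ≤ ∑ i ∈ Qg, (c i (g i) + M) := by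
        calc (Qg.card : ℝ) * M = ∑ _i ∈ Qg, M := by
              rw [Finset.sum_const, nsmul_eq_mul]
          _ ≤ _ := Finset.sum_le_sum (fun i _ => by linarith [hc i (g i)])
      have h3 : ((n : ℝ) + 1) * M ≤ ((Qf.card + Qg.card : ℕ) : ℝ) * M := by
        apply mul_le_mul_of_nonneg_right _ hM0
        push_cast
        exact_mod_cast by exact_mod_cast (by exact_mod_cast hcard' : (n + 1 : ℕ) ≤ Qf.card + Qg.card)
      push_cast at h3 ⊢
      linarith
    linarith

/-- Jonker–Volgenant: with `M` a sufficiently large positive number, the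
optimal ATSP value and the optimal value of the transformed symmetric instance
satisfy `ATSP(c) = STSP(c̃) − nM`. -/
theorem jonker_volgenant (n : ℕ) (hn : 2 ≤ n) (c : Fin n → Fin n → ℝ)
    (hc : ∀ i j, 0 ≤ c i j) (M : ℝ) (hM : ∑ i, ∑ j, c i j < M) :
    ATSPval n c = STSPval n c M - n * M := by
  classical
  have hM0 : 0 ≤ M := le_of_lt (lt_of_le_of_lt
    (Finset.sum_nonneg fun i _ => Finset.sum_nonneg fun j _ => hc i j) hM)
  set SA : Set ℝ := {v | ∃ σ : Equiv.Perm (Fin n), (∀ i j, σ.SameCycle i j) ∧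
    v = ∑ i, c i (σ i)} with hSA
  set SS : Set ℝ := {v | ∃ τ : Equiv.Perm (Fin n ⊕ Fin n),
    (∀ a b, τ.SameCycle a b) ∧
    (∀ a, jvAllowed n a (τ a)) ∧ v = ∑ a, jvCost n c M a (τ a)} with hSS
  have hSAne : SA.Nonempty := by
    obtain ⟨σ, hσ⟩ := jvAux_exists_cyclic n hn
    exact ⟨_, σ, hσ, rfl⟩
  have hSAbdd : BddBelow SA := by
    refine ⟨0, ?_⟩
    rintro v ⟨σ, _, rfl⟩
    exact Finset.sum_nonneg fun i _ => hc i (σ i)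
  have hSSbdd : BddBelow SS := by
    refine ⟨0, ?_⟩
    rintro v ⟨τ, _, _, rfl⟩
    exact Finset.sum_nonneg fun a _ => jvAux_cost_nonneg n c hc M hM0 a (τ a)
  have hmem : ∀ v ∈ SA, v + n * M ∈ SS := by
    rintro v ⟨σ, hσ, rfl⟩
    obtain ⟨τ, h1, h2, h3⟩ := jvAux_forward n hn c M σ hσ
    exact ⟨τ, h1, h2, h3.symm⟩
  have hSSne : SS.Nonempty := by
    obtain ⟨v, hv⟩ := hSAne
    exact ⟨v + n * M, hmem v hv⟩
  have hle1 : sInf SA + n * M ≤ sInf SS := by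
    apply le_csInf hSSne
    rintro w ⟨τ, h1, h2, rfl⟩
    obtain ⟨σ, hσ, hle⟩ := jvAux_backward n hn c hc M hM τ h1 h2
    have : sInf SA ≤ ∑ i, c i (σ i) := csInf_le hSAbdd ⟨σ, hσ, rfl⟩
    linarith
  have hle2 : sInf SS ≤ sInf SA + n * M := by
    have : ∀ v ∈ SA, sInf SS - n * M ≤ v := by
      intro v hv
      have := csInf_le hSSbdd (hmem v hv)
      linarith
    have h := le_csInf hSAne this
    linarith
  show sInf SA = sInf SS - n * M
  linarith
end
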